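/- If the velocity coefficient arrays u¹, u⁰, u² : ℕ⁴ → ℝ satisfy the divergence recurrence u⁰_{ω,p,q+1,r} = -((p+1)/(q+1)) u¹_{ω,p+1,q,r} - ((r+1)/(q+1)) u²_{ω,p,q,r+1} for all ω,p,q,r, and all three power series converge absolutely on an open set D ⊆ ℝ⁴, then the function U = (U¹, U⁰, U²) defined by the sums of these series satisfies ∇·U = 0 on D (where the divergence is taken with respect to the spatial variables x, y, z). -/

import Mathlib

open ContinuousLinearMap in
noncomputable def SP1 : (ℝ × ℝ × ℝ × ℝ) →L[ℝ] ℝ := fst ℝ ℝ (ℝ × ℝ × ℝ)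
open ContinuousLinearMap in
noncomputable def SP2 : (ℝ × ℝ × ℝ × ℝ) →L[ℝ] ℝ := (fst ℝ ℝ (ℝ × ℝ)).comp (snd ℝ ℝ (ℝ × ℝ × ℝ))
open ContinuousLinearMap in
noncomputable def SP3 : (ℝ × ℝ × ℝ × ℝ) →L[ℝ] ℝ :=
  ((fst ℝ ℝ ℝ).comp (snd ℝ ℝ (ℝ × ℝ))).comp (snd ℝ ℝ (ℝ × ℝ × ℝ))
open ContinuousLinearMap in
noncomputable def SP4 : (ℝ × ℝ × ℝ × ℝ) →L[ℝ] ℝ :=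
  ((snd ℝ ℝ ℝ).comp (snd ℝ ℝ (ℝ × ℝ))).comp (snd ℝ ℝ (ℝ × ℝ × ℝ))

@[simp] lemma SP1_apply (z : ℝ × ℝ × ℝ × ℝ) : SP1 z = z.1 := rfl
@[simp] lemma SP2_apply (z : ℝ × ℝ × ℝ × ℝ) : SP2 z = z.2.1 := rfl
@[simp] lemma SP3_apply (z : ℝ × ℝ × ℝ × ℝ) : SP3 z = z.2.2.1 := rfl
@[simp] lemma SP4_apply (z : ℝ × ℝ × ℝ × ℝ) : SP4 z = z.2.2.2 := rfl

lemma SP1_norm : ‖SP1‖ ≤ 1 := ContinuousLinearMap.norm_fst_le ..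
lemma SP2_norm : ‖SP2‖ ≤ 1 := by
  refine le_trans (ContinuousLinearMap.opNorm_comp_le _ _) ?_
  calc _ ≤ (1:ℝ) * 1 := by
        gcongr
        · exact ContinuousLinearMap.norm_fst_le ..
        · exact ContinuousLinearMap.norm_snd_le ..
       _ = 1 := by norm_num
lemma SP3_norm : ‖SP3‖ ≤ 1 := by
  refine le_trans (ContinuousLinearMap.opNorm_comp_le _ _) ?_
  refine le_trans (mul_le_mul (le_trans (ContinuousLinearMap.opNorm_comp_le _ _) ?_)
    (ContinuousLinearMap.norm_snd_le ..) (norm_nonneg _) zero_le_one) (by norm_num)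
  calc _ ≤ (1:ℝ) * 1 := by
        gcongr
        · exact ContinuousLinearMap.norm_fst_le ..
        · exact ContinuousLinearMap.norm_snd_le ..
       _ = 1 := by norm_num
lemma SP4_norm : ‖SP4‖ ≤ 1 := by
  refine le_trans (ContinuousLinearMap.opNorm_comp_le _ _) ?_
  refine le_trans (mul_le_mul (le_trans (ContinuousLinearMap.opNorm_comp_le _ _) ?_)
    (ContinuousLinearMap.norm_snd_le ..) (norm_nonneg _) zero_le_one) (by norm_num)
  calc _ ≤ (1:ℝ) * 1 := by
        gcongr
        · exact ContinuousLinearMap.norm_snd_le ..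
        · exact ContinuousLinearMap.norm_snd_le ..
       _ = 1 := by norm_num

noncomputable def mder (c : ℝ) (n1 n2 n3 n4 : ℕ) (y : ℝ × ℝ × ℝ × ℝ) :
    (ℝ × ℝ × ℝ × ℝ) →L[ℝ] ℝ :=
  (c * ((n1 : ℝ) * y.1 ^ (n1 - 1)) * y.2.1 ^ n2 * y.2.2.1 ^ n3 * y.2.2.2 ^ n4) • SP1
  + (c * y.1 ^ n1 * ((n2 : ℝ) * y.2.1 ^ (n2 - 1)) * y.2.2.1 ^ n3 * y.2.2.2 ^ n4) • SP2
  + (c * y.1 ^ n1 * y.2.1 ^ n2 * ((n3 : ℝ) * y.2.2.1 ^ (n3 - 1)) * y.2.2.2 ^ n4) • SP3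
  + (c * y.1 ^ n1 * y.2.1 ^ n2 * y.2.2.1 ^ n3 * ((n4 : ℝ) * y.2.2.2 ^ (n4 - 1))) • SP4

lemma mder_hasFDerivAt (c : ℝ) (n1 n2 n3 n4 : ℕ) (y : ℝ × ℝ × ℝ × ℝ) :
    HasFDerivAt (fun v : ℝ × ℝ × ℝ × ℝ =>
      c * v.1 ^ n1 * v.2.1 ^ n2 * v.2.2.1 ^ n3 * v.2.2.2 ^ n4) (mder c n1 n2 n3 n4 y) y := by
  have h1 : HasFDerivAt (fun v : ℝ × ℝ × ℝ × ℝ => v.1) SP1 y := hasFDerivAt_fst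
  have h2 : HasFDerivAt (fun v : ℝ × ℝ × ℝ × ℝ => v.2.1) SP2 y :=
    hasFDerivAt_fst.comp y hasFDerivAt_snd
  have h3 : HasFDerivAt (fun v : ℝ × ℝ × ℝ × ℝ => v.2.2.1) SP3 y :=
    (hasFDerivAt_fst.comp y.2 hasFDerivAt_snd).comp y hasFDerivAt_snd
  have h4 : HasFDerivAt (fun v : ℝ × ℝ × ℝ × ℝ => v.2.2.2) SP4 y :=
    (hasFDerivAt_snd.comp y.2 hasFDerivAt_snd).comp y hasFDerivAt_snd
  have hA : HasFDerivAt (fun v : ℝ × ℝ × ℝ × ℝ => v.1 ^ n1)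
      (((n1 : ℝ) * y.1 ^ (n1 - 1)) • SP1) y := (hasDerivAt_pow n1 y.1).comp_hasFDerivAt y h1
  have hB : HasFDerivAt (fun v : ℝ × ℝ × ℝ × ℝ => v.2.1 ^ n2)
      (((n2 : ℝ) * y.2.1 ^ (n2 - 1)) • SP2) y := (hasDerivAt_pow n2 y.2.1).comp_hasFDerivAt y h2
  have hC : HasFDerivAt (fun v : ℝ × ℝ × ℝ × ℝ => v.2.2.1 ^ n3)
      (((n3 : ℝ) * y.2.2.1 ^ (n3 - 1)) • SP3) y :=
    (hasDerivAt_pow n3 y.2.2.1).comp_hasFDerivAt y h3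
  have hD : HasFDerivAt (fun v : ℝ × ℝ × ℝ × ℝ => v.2.2.2 ^ n4)
      (((n4 : ℝ) * y.2.2.2 ^ (n4 - 1)) • SP4) y :=
    (hasDerivAt_pow n4 y.2.2.2).comp_hasFDerivAt y h4
  have h : HasFDerivAt (fun v : ℝ × ℝ × ℝ × ℝ =>
      c * v.1 ^ n1 * v.2.1 ^ n2 * v.2.2.1 ^ n3 * v.2.2.2 ^ n4) _ y :=
    (((hA.const_mul c).mul hB).mul hC).mul hD
  refine h.congr_fderiv ?_
  refine ContinuousLinearMap.ext fun z => ?_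
  obtain ⟨z1, z2, z3, z4⟩ := z
  simp [mder, ContinuousLinearMap.add_apply, ContinuousLinearMap.smul_apply, smul_eq_mul]
  ring

lemma smul_norm_aux (a : ℝ) (P : (ℝ × ℝ × ℝ × ℝ) →L[ℝ] ℝ) (hP : ‖P‖ ≤ 1) :
    ‖a • P‖ ≤ |a| := by
  refine le_trans (ContinuousLinearMap.opNorm_smul_le _ _) ?_
  rw [Real.norm_eq_abs]
  have := mul_le_mul_of_nonneg_left hP (abs_nonneg a)
  simpa using this

lemma mder_norm_le (c : ℝ) (n1 n2 n3 n4 : ℕ) (y : ℝ × ℝ × ℝ × ℝ) :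
    ‖mder c n1 n2 n3 n4 y‖ ≤
      |c| * ((n1 : ℝ) * |y.1| ^ (n1 - 1)) * |y.2.1| ^ n2 * |y.2.2.1| ^ n3 * |y.2.2.2| ^ n4
      + |c| * |y.1| ^ n1 * ((n2 : ℝ) * |y.2.1| ^ (n2 - 1)) * |y.2.2.1| ^ n3 * |y.2.2.2| ^ n4
      + |c| * |y.1| ^ n1 * |y.2.1| ^ n2 * ((n3 : ℝ) * |y.2.2.1| ^ (n3 - 1)) * |y.2.2.2| ^ n4
      + |c| * |y.1| ^ n1 * |y.2.1| ^ n2 * |y.2.2.1| ^ n3 * ((n4 : ℝ) * |y.2.2.2| ^ (n4 - 1))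
      := by
  have b1 := smul_norm_aux (c * ((n1 : ℝ) * y.1 ^ (n1 - 1)) * y.2.1 ^ n2 * y.2.2.1 ^ n3
    * y.2.2.2 ^ n4) SP1 SP1_norm
  have b2 := smul_norm_aux (c * y.1 ^ n1 * ((n2 : ℝ) * y.2.1 ^ (n2 - 1)) * y.2.2.1 ^ n3
    * y.2.2.2 ^ n4) SP2 SP2_norm
  have b3 := smul_norm_aux (c * y.1 ^ n1 * y.2.1 ^ n2 * ((n3 : ℝ) * y.2.2.1 ^ (n3 - 1))
    * y.2.2.2 ^ n4) SP3 SP3_norm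
  have b4 := smul_norm_aux (c * y.1 ^ n1 * y.2.1 ^ n2 * y.2.2.1 ^ n3
    * ((n4 : ℝ) * y.2.2.2 ^ (n4 - 1))) SP4 SP4_norm
  simp only [abs_mul, abs_pow, Nat.abs_cast] at b1 b2 b3 b4
  refine le_trans (norm_add_le _ _) (add_le_add (le_trans (norm_add_le _ _)
    (add_le_add (le_trans (norm_add_le _ _) (add_le_add b1 b2)) b3)) b4)

lemma exists_pow_bound {ρ σ : ℝ} (hρ : 0 ≤ ρ) (h : ρ < σ) :
    ∃ C : ℝ, 0 ≤ C ∧ ∀ k : ℕ, (k : ℝ) * ρ ^ (k - 1) ≤ C * σ ^ k := by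
  have hσ : 0 < σ := lt_of_le_of_lt hρ h
  set θ := ρ / σ with hθdef
  have hθ0 : 0 ≤ θ := div_nonneg hρ hσ.le
  have hθ1 : θ < 1 := (div_lt_one hσ).2 h
  have hsum : Summable (fun n : ℕ => ((n : ℝ) + 1) * θ ^ n) := by
    have h1 : Summable (fun n : ℕ => (n : ℝ) * θ ^ n) := by
      simpa using summable_pow_mul_geometric_of_norm_lt_one 1
        (r := θ) (by rw [Real.norm_eq_abs, abs_of_nonneg hθ0]; exact hθ1)
    have h2 : Summable (fun n : ℕ => θ ^ n) := summable_geometric_of_lt_one hθ0 hθ1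
    simpa [add_mul] using h1.add h2
  obtain ⟨M, hM⟩ := hsum.tendsto_atTop_zero.bddAbove_range
  have hM0 : (1:ℝ) ≤ M := by
    have := hM ⟨0, rfl⟩
    simpa using this
  refine ⟨M / σ, by positivity, fun k => ?_⟩
  cases k with
  | zero =>
    simp only [Nat.cast_zero, zero_mul, pow_zero, mul_one]
    positivity
  | succ m =>
    have hterm : ((m : ℝ) + 1) * θ ^ m ≤ M := hM ⟨m, rfl⟩
    have hρm : ρ ^ m = θ ^ m * σ ^ m := by
      rw [hθdef, div_pow, div_mul_cancel₀]
      positivity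
    have : ((m : ℝ) + 1) * ρ ^ m ≤ M * σ ^ m := by
      rw [hρm, ← mul_assoc]
      exact mul_le_mul_of_nonneg_right hterm (by positivity)
    calc ((m + 1 : ℕ) : ℝ) * ρ ^ (m + 1 - 1) = ((m : ℝ) + 1) * ρ ^ m := by push_cast; ring_nf
      _ ≤ M * σ ^ m := this
      _ = M / σ * σ ^ (m + 1) := by field_simp [pow_succ]; try ring

@[simp] lemma mder_apply_ex (c : ℝ) (n1 n2 n3 n4 : ℕ) (y : ℝ × ℝ × ℝ × ℝ) :
    mder c n1 n2 n3 n4 y ((0:ℝ), (1:ℝ), (0:ℝ), (0:ℝ))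
      = c * y.1 ^ n1 * ((n2 : ℝ) * y.2.1 ^ (n2 - 1)) * y.2.2.1 ^ n3 * y.2.2.2 ^ n4 := by
  simp [mder]

@[simp] lemma mder_apply_ey (c : ℝ) (n1 n2 n3 n4 : ℕ) (y : ℝ × ℝ × ℝ × ℝ) :
    mder c n1 n2 n3 n4 y ((0:ℝ), (0:ℝ), (1:ℝ), (0:ℝ))
      = c * y.1 ^ n1 * y.2.1 ^ n2 * ((n3 : ℝ) * y.2.2.1 ^ (n3 - 1)) * y.2.2.2 ^ n4 := by
  simp [mder]

@[simp] lemma mder_apply_ez (c : ℝ) (n1 n2 n3 n4 : ℕ) (y : ℝ × ℝ × ℝ × ℝ) :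
    mder c n1 n2 n3 n4 y ((0:ℝ), (0:ℝ), (0:ℝ), (1:ℝ))
      = c * y.1 ^ n1 * y.2.1 ^ n2 * y.2.2.1 ^ n3 * ((n4 : ℝ) * y.2.2.2 ^ (n4 - 1)) := by
  simp [mder]

lemma prod4_le {c x1 x2 x3 x4 y1 y2 y3 y4 : ℝ} (hc : 0 ≤ c) (hx2 : 0 ≤ x2) (hx3 : 0 ≤ x3)
    (hx4 : 0 ≤ x4) (h1 : x1 ≤ y1) (h2 : x2 ≤ y2) (h3 : x3 ≤ y3) (h4 : x4 ≤ y4)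
    (hy1 : 0 ≤ y1) (hy2 : 0 ≤ y2) :
    c * x1 * x2 * x3 * x4 ≤ c * y1 * y2 * y3 * y4 := by
  have s1 : c * x1 ≤ c * y1 := mul_le_mul_of_nonneg_left h1 hc
  have s2 : c * x1 * x2 ≤ c * y1 * y2 := mul_le_mul s1 h2 hx2 (mul_nonneg hc hy1)
  have s3 : c * x1 * x2 * x3 ≤ c * y1 * y2 * y3 :=
    mul_le_mul s2 h3 hx3 (mul_nonneg (mul_nonneg hc hy1) hy2)
  exact mul_le_mul s3 h4 hx4 (mul_nonneg (mul_nonneg (mul_nonneg hc hy1) hy2) (hx3.trans h3))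

theorem stmt_18 (u1 u0 u2 : ℕ → ℕ → ℕ → ℕ → ℝ)
    (hrec : ∀ ω p q r : ℕ,
      u0 ω p (q + 1) r = -(((p : ℝ) + 1) / ((q : ℝ) + 1)) * u1 ω (p + 1) q r
        - (((r : ℝ) + 1) / ((q : ℝ) + 1)) * u2 ω p q (r + 1))
    (D : Set (ℝ × ℝ × ℝ × ℝ)) (hD : IsOpen D)
    (hconv : ∀ v ∈ D, ∀ w : ℕ → ℕ → ℕ → ℕ → ℝ, (w = u1 ∨ w = u0 ∨ w = u2) →
      Summable (fun i : ℕ × ℕ × ℕ × ℕ =>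
        |w i.1 i.2.1 i.2.2.1 i.2.2.2| * |v.1| ^ i.1 * |v.2.1| ^ i.2.1
          * |v.2.2.1| ^ i.2.2.1 * |v.2.2.2| ^ i.2.2.2))
    (U1 U0 U2 : ℝ × ℝ × ℝ × ℝ → ℝ)
    (hU1 : U1 = fun v => ∑' i : ℕ × ℕ × ℕ × ℕ,
      u1 i.1 i.2.1 i.2.2.1 i.2.2.2 * v.1 ^ i.1 * v.2.1 ^ i.2.1
        * v.2.2.1 ^ i.2.2.1 * v.2.2.2 ^ i.2.2.2)
    (hU0 : U0 = fun v => ∑' i : ℕ × ℕ × ℕ × ℕ,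
      u0 i.1 i.2.1 i.2.2.1 i.2.2.2 * v.1 ^ i.1 * v.2.1 ^ i.2.1
        * v.2.2.1 ^ i.2.2.1 * v.2.2.2 ^ i.2.2.2)
    (hU2 : U2 = fun v => ∑' i : ℕ × ℕ × ℕ × ℕ,
      u2 i.1 i.2.1 i.2.2.1 i.2.2.2 * v.1 ^ i.1 * v.2.1 ^ i.2.1
        * v.2.2.1 ^ i.2.2.1 * v.2.2.2 ^ i.2.2.2) :
    ∀ v ∈ D,
      DifferentiableAt ℝ U1 v ∧ DifferentiableAt ℝ U0 v ∧ DifferentiableAt ℝ U2 v ∧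
      fderiv ℝ U1 v (0, 1, 0, 0) + fderiv ℝ U0 v (0, 0, 1, 0)
        + fderiv ℝ U2 v (0, 0, 0, 1) = 0 := by
  intro v hv
  obtain ⟨ε, hε, hball⟩ := Metric.isOpen_iff.1 hD v hv
  set δ := ε / 2 with hδdef
  have hδ : 0 < δ := by positivity
  -- the shift function
  set sh : ℝ → ℝ := fun x => if 0 ≤ x then x + δ else x - δ with hshdef
  have hsh_abs : ∀ x : ℝ, |sh x| = |x| + δ := by
    intro x
    by_cases h : 0 ≤ x
    · simp only [hshdef, if_pos h]
      rw [abs_of_nonneg (by linarith), abs_of_nonneg h]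
    · push_neg at h
      simp only [hshdef, if_neg (not_le.2 h)]
      rw [abs_of_neg (by linarith), abs_of_neg h]
      ring
  have hsh_dist : ∀ x : ℝ, dist (sh x) x = δ := by
    intro x
    rw [Real.dist_eq]
    by_cases h : 0 ≤ x
    · simp only [hshdef, if_pos h]
      rw [add_sub_cancel_left, abs_of_nonneg hδ.le]
    · simp only [hshdef, if_neg h]
      rw [sub_sub_cancel_left, abs_neg, abs_of_nonneg hδ.le]
  have hw : ((sh v.1, sh v.2.1, sh v.2.2.1, sh v.2.2.2) : ℝ × ℝ × ℝ × ℝ) ∈ D := by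
    apply hball
    simp only [Metric.mem_ball, Prod.dist_eq, hsh_dist, max_self]
    rw [hδdef]; linarith
  -- summability with the enlarged radii
  have key_sum : ∀ (a : ℕ → ℕ → ℕ → ℕ → ℝ), (a = u1 ∨ a = u0 ∨ a = u2) →
      Summable (fun i : ℕ × ℕ × ℕ × ℕ =>
        |a i.1 i.2.1 i.2.2.1 i.2.2.2| * (|v.1| + δ) ^ i.1 * (|v.2.1| + δ) ^ i.2.1
          * (|v.2.2.1| + δ) ^ i.2.2.1 * (|v.2.2.2| + δ) ^ i.2.2.2) := by
    intro a ha
    have := hconv _ hw a ha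
    simpa only [hsh_abs] using this
  -- constants
  obtain ⟨C1, hC10, hC1⟩ := exists_pow_bound (ρ := |v.1| + δ / 2) (σ := |v.1| + δ)
    (by positivity) (by linarith)
  obtain ⟨C2, hC20, hC2⟩ := exists_pow_bound (ρ := |v.2.1| + δ / 2) (σ := |v.2.1| + δ)
    (by positivity) (by linarith)
  obtain ⟨C3, hC30, hC3⟩ := exists_pow_bound (ρ := |v.2.2.1| + δ / 2) (σ := |v.2.2.1| + δ)
    (by positivity) (by linarith)
  obtain ⟨C4, hC40, hC4⟩ := exists_pow_bound (ρ := |v.2.2.2| + δ / 2) (σ := |v.2.2.2| + δ)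
    (by positivity) (by linarith)
  -- the ball on which we work
  have hs_open : IsOpen (Metric.ball v (δ / 2)) := Metric.isOpen_ball
  have hs_conn : IsPreconnected (Metric.ball v (δ / 2)) := (convex_ball v (δ / 2)).isPreconnected
  have hvs : v ∈ Metric.ball v (δ / 2) := Metric.mem_ball_self (by positivity)
  have hy_bounds : ∀ y ∈ Metric.ball v (δ / 2),
      |y.1| ≤ |v.1| + δ / 2 ∧ |y.2.1| ≤ |v.2.1| + δ / 2 ∧ |y.2.2.1| ≤ |v.2.2.1| + δ / 2
        ∧ |y.2.2.2| ≤ |v.2.2.2| + δ / 2 := by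
    intro y hy
    have hdist : dist y v < δ / 2 := Metric.mem_ball.1 hy
    rw [Prod.dist_eq] at hdist
    have h1 : dist y.1 v.1 < δ / 2 := lt_of_le_of_lt (le_max_left _ _) hdist
    have h2' : dist y.2 v.2 < δ / 2 := lt_of_le_of_lt (le_max_right _ _) hdist
    rw [Prod.dist_eq] at h2'
    have h2 : dist y.2.1 v.2.1 < δ / 2 := lt_of_le_of_lt (le_max_left _ _) h2'
    have h3' : dist y.2.2 v.2.2 < δ / 2 := lt_of_le_of_lt (le_max_right _ _) h2'
    rw [Prod.dist_eq] at h3'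
    have h3 : dist y.2.2.1 v.2.2.1 < δ / 2 := lt_of_le_of_lt (le_max_left _ _) h3'
    have h4 : dist y.2.2.2 v.2.2.2 < δ / 2 := lt_of_le_of_lt (le_max_right _ _) h3'
    rw [Real.dist_eq] at h1 h2 h3 h4
    refine ⟨?_, ?_, ?_, ?_⟩
    · have := abs_sub_abs_le_abs_sub y.1 v.1; linarith
    · have := abs_sub_abs_le_abs_sub y.2.1 v.2.1; linarith
    · have := abs_sub_abs_le_abs_sub y.2.2.1 v.2.2.1; linarith
    · have := abs_sub_abs_le_abs_sub y.2.2.2 v.2.2.2; linarith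
  -- the main derivative statement for a generic coefficient array
  have main : ∀ (a : ℕ → ℕ → ℕ → ℕ → ℝ), (a = u1 ∨ a = u0 ∨ a = u2) →
      HasFDerivAt (fun y : ℝ × ℝ × ℝ × ℝ => ∑' i : ℕ × ℕ × ℕ × ℕ,
          a i.1 i.2.1 i.2.2.1 i.2.2.2 * y.1 ^ i.1 * y.2.1 ^ i.2.1
            * y.2.2.1 ^ i.2.2.1 * y.2.2.2 ^ i.2.2.2)
        (∑' i : ℕ × ℕ × ℕ × ℕ,
          mder (a i.1 i.2.1 i.2.2.1 i.2.2.2) i.1 i.2.1 i.2.2.1 i.2.2.2 v) v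
      ∧ Summable (fun i : ℕ × ℕ × ℕ × ℕ =>
          mder (a i.1 i.2.1 i.2.2.1 i.2.2.2) i.1 i.2.1 i.2.2.1 i.2.2.2 v) := by
    intro a ha
    have hu_sum : Summable (fun i : ℕ × ℕ × ℕ × ℕ => (C1 + C2 + C3 + C4) *
        (|a i.1 i.2.1 i.2.2.1 i.2.2.2| * (|v.1| + δ) ^ i.1 * (|v.2.1| + δ) ^ i.2.1
          * (|v.2.2.1| + δ) ^ i.2.2.1 * (|v.2.2.2| + δ) ^ i.2.2.2)) :=
      (key_sum a ha).mul_left _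
    have hbound : ∀ (i : ℕ × ℕ × ℕ × ℕ) (y : ℝ × ℝ × ℝ × ℝ), y ∈ Metric.ball v (δ / 2) →
        ‖mder (a i.1 i.2.1 i.2.2.1 i.2.2.2) i.1 i.2.1 i.2.2.1 i.2.2.2 y‖ ≤
          (C1 + C2 + C3 + C4) *
            (|a i.1 i.2.1 i.2.2.1 i.2.2.2| * (|v.1| + δ) ^ i.1 * (|v.2.1| + δ) ^ i.2.1
              * (|v.2.2.1| + δ) ^ i.2.2.1 * (|v.2.2.2| + δ) ^ i.2.2.2) := by
      rintro ⟨n1, n2, n3, n4⟩ y hy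
      obtain ⟨hb1, hb2, hb3, hb4⟩ := hy_bounds y hy
      refine le_trans (mder_norm_le _ _ _ _ _ y) ?_
      have hc : (0:ℝ) ≤ |a n1 n2 n3 n4| := abs_nonneg _
      have hp1 : |y.1| ^ n1 ≤ (|v.1| + δ) ^ n1 :=
        pow_le_pow_left₀ (abs_nonneg _) (by linarith) _
      have hp2 : |y.2.1| ^ n2 ≤ (|v.2.1| + δ) ^ n2 :=
        pow_le_pow_left₀ (abs_nonneg _) (by linarith) _
      have hp3 : |y.2.2.1| ^ n3 ≤ (|v.2.2.1| + δ) ^ n3 :=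
        pow_le_pow_left₀ (abs_nonneg _) (by linarith) _
      have hp4 : |y.2.2.2| ^ n4 ≤ (|v.2.2.2| + δ) ^ n4 :=
        pow_le_pow_left₀ (abs_nonneg _) (by linarith) _
      have he1 : (n1 : ℝ) * |y.1| ^ (n1 - 1) ≤ C1 * (|v.1| + δ) ^ n1 :=
        le_trans (mul_le_mul_of_nonneg_left
          (pow_le_pow_left₀ (abs_nonneg _) hb1 _) (Nat.cast_nonneg _)) (hC1 n1)
      have he2 : (n2 : ℝ) * |y.2.1| ^ (n2 - 1) ≤ C2 * (|v.2.1| + δ) ^ n2 :=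
        le_trans (mul_le_mul_of_nonneg_left
          (pow_le_pow_left₀ (abs_nonneg _) hb2 _) (Nat.cast_nonneg _)) (hC2 n2)
      have he3 : (n3 : ℝ) * |y.2.2.1| ^ (n3 - 1) ≤ C3 * (|v.2.2.1| + δ) ^ n3 :=
        le_trans (mul_le_mul_of_nonneg_left
          (pow_le_pow_left₀ (abs_nonneg _) hb3 _) (Nat.cast_nonneg _)) (hC3 n3)
      have he4 : (n4 : ℝ) * |y.2.2.2| ^ (n4 - 1) ≤ C4 * (|v.2.2.2| + δ) ^ n4 :=
        le_trans (mul_le_mul_of_nonneg_left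
          (pow_le_pow_left₀ (abs_nonneg _) hb4 _) (Nat.cast_nonneg _)) (hC4 n4)
      have t1 : |a n1 n2 n3 n4| * ((n1 : ℝ) * |y.1| ^ (n1 - 1)) * |y.2.1| ^ n2
          * |y.2.2.1| ^ n3 * |y.2.2.2| ^ n4 ≤
          |a n1 n2 n3 n4| * (C1 * (|v.1| + δ) ^ n1) * (|v.2.1| + δ) ^ n2
          * (|v.2.2.1| + δ) ^ n3 * (|v.2.2.2| + δ) ^ n4 :=
        prod4_le hc (by positivity) (by positivity) (by positivity) he1 hp2 hp3 hp4
          (mul_nonneg hC10 (by positivity)) (by positivity)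
      have t2 : |a n1 n2 n3 n4| * |y.1| ^ n1 * ((n2 : ℝ) * |y.2.1| ^ (n2 - 1))
          * |y.2.2.1| ^ n3 * |y.2.2.2| ^ n4 ≤
          |a n1 n2 n3 n4| * (|v.1| + δ) ^ n1 * (C2 * (|v.2.1| + δ) ^ n2)
          * (|v.2.2.1| + δ) ^ n3 * (|v.2.2.2| + δ) ^ n4 :=
        prod4_le hc (by positivity) (by positivity) (by positivity) hp1 he2 hp3 hp4
          (by positivity) (mul_nonneg hC20 (by positivity))
      have t3 : |a n1 n2 n3 n4| * |y.1| ^ n1 * |y.2.1| ^ n2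
          * ((n3 : ℝ) * |y.2.2.1| ^ (n3 - 1)) * |y.2.2.2| ^ n4 ≤
          |a n1 n2 n3 n4| * (|v.1| + δ) ^ n1 * (|v.2.1| + δ) ^ n2
          * (C3 * (|v.2.2.1| + δ) ^ n3) * (|v.2.2.2| + δ) ^ n4 :=
        prod4_le hc (by positivity) (by positivity) (by positivity) hp1 hp2 he3 hp4
          (by positivity) (by positivity)
      have t4 : |a n1 n2 n3 n4| * |y.1| ^ n1 * |y.2.1| ^ n2
          * |y.2.2.1| ^ n3 * ((n4 : ℝ) * |y.2.2.2| ^ (n4 - 1)) ≤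
          |a n1 n2 n3 n4| * (|v.1| + δ) ^ n1 * (|v.2.1| + δ) ^ n2
          * (|v.2.2.1| + δ) ^ n3 * (C4 * (|v.2.2.2| + δ) ^ n4) :=
        prod4_le hc (by positivity) (by positivity) (by positivity) hp1 hp2 hp3 he4
          (by positivity) (by positivity)
      calc |a n1 n2 n3 n4| * ((n1 : ℝ) * |y.1| ^ (n1 - 1)) * |y.2.1| ^ n2 * |y.2.2.1| ^ n3
            * |y.2.2.2| ^ n4
          + |a n1 n2 n3 n4| * |y.1| ^ n1 * ((n2 : ℝ) * |y.2.1| ^ (n2 - 1)) * |y.2.2.1| ^ n3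
            * |y.2.2.2| ^ n4
          + |a n1 n2 n3 n4| * |y.1| ^ n1 * |y.2.1| ^ n2 * ((n3 : ℝ) * |y.2.2.1| ^ (n3 - 1))
            * |y.2.2.2| ^ n4
          + |a n1 n2 n3 n4| * |y.1| ^ n1 * |y.2.1| ^ n2 * |y.2.2.1| ^ n3
            * ((n4 : ℝ) * |y.2.2.2| ^ (n4 - 1))
          ≤ |a n1 n2 n3 n4| * (C1 * (|v.1| + δ) ^ n1) * (|v.2.1| + δ) ^ n2
            * (|v.2.2.1| + δ) ^ n3 * (|v.2.2.2| + δ) ^ n4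
          + |a n1 n2 n3 n4| * (|v.1| + δ) ^ n1 * (C2 * (|v.2.1| + δ) ^ n2)
            * (|v.2.2.1| + δ) ^ n3 * (|v.2.2.2| + δ) ^ n4
          + |a n1 n2 n3 n4| * (|v.1| + δ) ^ n1 * (|v.2.1| + δ) ^ n2
            * (C3 * (|v.2.2.1| + δ) ^ n3) * (|v.2.2.2| + δ) ^ n4
          + |a n1 n2 n3 n4| * (|v.1| + δ) ^ n1 * (|v.2.1| + δ) ^ n2
            * (|v.2.2.1| + δ) ^ n3 * (C4 * (|v.2.2.2| + δ) ^ n4) := by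
            exact add_le_add (add_le_add (add_le_add t1 t2) t3) t4
        _ = (C1 + C2 + C3 + C4) * (|a n1 n2 n3 n4| * (|v.1| + δ) ^ n1 * (|v.2.1| + δ) ^ n2
            * (|v.2.2.1| + δ) ^ n3 * (|v.2.2.2| + δ) ^ n4) := by ring
    have hf0 : Summable (fun i : ℕ × ℕ × ℕ × ℕ =>
        a i.1 i.2.1 i.2.2.1 i.2.2.2 * v.1 ^ i.1 * v.2.1 ^ i.2.1
          * v.2.2.1 ^ i.2.2.1 * v.2.2.2 ^ i.2.2.2) := by
      refine Summable.of_abs ?_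
      have := hconv v hv a ha
      simp only [abs_mul, abs_pow]
      exact this
    constructor
    · exact hasFDerivAt_tsum_of_isPreconnected hu_sum hs_open hs_conn
        (fun i y _ => mder_hasFDerivAt _ _ _ _ _ y) hbound hvs hf0 hvs
    · exact Summable.of_norm_bounded hu_sum (fun i => hbound i v hvs)
  obtain ⟨hd1, hsL1⟩ := main u1 (Or.inl rfl)
  obtain ⟨hd0, hsL0⟩ := main u0 (Or.inr (Or.inl rfl))
  obtain ⟨hd2, hsL2⟩ := main u2 (Or.inr (Or.inr rfl))
  subst hU1; subst hU0; subst hU2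
  refine ⟨hd1.differentiableAt, hd0.differentiableAt, hd2.differentiableAt, ?_⟩
  rw [hd1.fderiv, hd0.fderiv, hd2.fderiv]
  have apply_tsum : ∀ (L : ℕ × ℕ × ℕ × ℕ → (ℝ × ℝ × ℝ × ℝ) →L[ℝ] ℝ), Summable L →
      ∀ e : ℝ × ℝ × ℝ × ℝ, (∑' i, L i) e = ∑' i, L i e := fun L hL e =>
    (ContinuousLinearMap.apply ℝ ℝ e).map_tsum hL
  rw [apply_tsum _ hsL1 _, apply_tsum _ hsL0 _, apply_tsum _ hsL2 _]
  simp only [mder_apply_ex, mder_apply_ey, mder_apply_ez]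
  -- summability of the evaluated families
  have hA : Summable (fun i : ℕ × ℕ × ℕ × ℕ =>
      u1 i.1 i.2.1 i.2.2.1 i.2.2.2 * v.1 ^ i.1 * ((i.2.1 : ℝ) * v.2.1 ^ (i.2.1 - 1))
        * v.2.2.1 ^ i.2.2.1 * v.2.2.2 ^ i.2.2.2) := by
    have h := hsL1.map (ContinuousLinearMap.apply ℝ ℝ ((0:ℝ), (1:ℝ), (0:ℝ), (0:ℝ)))
      (ContinuousLinearMap.apply ℝ ℝ _).continuous
    simpa only [Function.comp_def, ContinuousLinearMap.apply_apply, mder_apply_ex] using h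
  have hB : Summable (fun i : ℕ × ℕ × ℕ × ℕ =>
      u0 i.1 i.2.1 i.2.2.1 i.2.2.2 * v.1 ^ i.1 * v.2.1 ^ i.2.1
        * ((i.2.2.1 : ℝ) * v.2.2.1 ^ (i.2.2.1 - 1)) * v.2.2.2 ^ i.2.2.2) := by
    have h := hsL0.map (ContinuousLinearMap.apply ℝ ℝ ((0:ℝ), (0:ℝ), (1:ℝ), (0:ℝ)))
      (ContinuousLinearMap.apply ℝ ℝ _).continuous
    simpa only [Function.comp_def, ContinuousLinearMap.apply_apply, mder_apply_ey] using h
  have hC : Summable (fun i : ℕ × ℕ × ℕ × ℕ =>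
      u2 i.1 i.2.1 i.2.2.1 i.2.2.2 * v.1 ^ i.1 * v.2.1 ^ i.2.1
        * v.2.2.1 ^ i.2.2.1 * ((i.2.2.2 : ℝ) * v.2.2.2 ^ (i.2.2.2 - 1))) := by
    have h := hsL2.map (ContinuousLinearMap.apply ℝ ℝ ((0:ℝ), (0:ℝ), (0:ℝ), (1:ℝ)))
      (ContinuousLinearMap.apply ℝ ℝ _).continuous
    simpa only [Function.comp_def, ContinuousLinearMap.apply_apply, mder_apply_ez] using h
  -- reindexing lemmas
  have hg2 : Function.Injective (fun i : ℕ × ℕ × ℕ × ℕ =>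
      ((i.1, i.2.1 + 1, i.2.2.1, i.2.2.2) : ℕ × ℕ × ℕ × ℕ)) := by
    intro a b h
    simp only [Prod.ext_iff] at h ⊢
    omega
  have hg3 : Function.Injective (fun i : ℕ × ℕ × ℕ × ℕ =>
      ((i.1, i.2.1, i.2.2.1 + 1, i.2.2.2) : ℕ × ℕ × ℕ × ℕ)) := by
    intro a b h
    simp only [Prod.ext_iff] at h ⊢
    omega
  have hg4 : Function.Injective (fun i : ℕ × ℕ × ℕ × ℕ =>
      ((i.1, i.2.1, i.2.2.1, i.2.2.2 + 1) : ℕ × ℕ × ℕ × ℕ)) := by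
    intro a b h
    simp only [Prod.ext_iff] at h ⊢
    omega
  have hre1 : ∑' i : ℕ × ℕ × ℕ × ℕ,
      u1 i.1 (i.2.1 + 1) i.2.2.1 i.2.2.2 * v.1 ^ i.1
        * (((i.2.1 : ℝ) + 1) * v.2.1 ^ i.2.1) * v.2.2.1 ^ i.2.2.1 * v.2.2.2 ^ i.2.2.2
      = ∑' i : ℕ × ℕ × ℕ × ℕ,
      u1 i.1 i.2.1 i.2.2.1 i.2.2.2 * v.1 ^ i.1 * ((i.2.1 : ℝ) * v.2.1 ^ (i.2.1 - 1))
        * v.2.2.1 ^ i.2.2.1 * v.2.2.2 ^ i.2.2.2 := by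
    have := hg2.tsum_eq (f := fun i : ℕ × ℕ × ℕ × ℕ =>
      u1 i.1 i.2.1 i.2.2.1 i.2.2.2 * v.1 ^ i.1 * ((i.2.1 : ℝ) * v.2.1 ^ (i.2.1 - 1))
        * v.2.2.1 ^ i.2.2.1 * v.2.2.2 ^ i.2.2.2) ?_
    · rw [← this]
      refine tsum_congr fun i => ?_
      obtain ⟨ω, p, q, r⟩ := i
      push_cast
      simp [Nat.add_sub_cancel]
    · rintro ⟨ω, p, q, r⟩ hi
      rcases Nat.eq_zero_or_pos p with h0 | hp
      · exfalso; apply hi; subst h0; simp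
      · exact ⟨(ω, p - 1, q, r), by show (ω, p - 1 + 1, q, r) = (ω, p, q, r); simp only [Prod.ext_iff, and_true, true_and, eq_self_iff_true]; omega⟩
  have hre0 : ∑' i : ℕ × ℕ × ℕ × ℕ,
      u0 i.1 i.2.1 (i.2.2.1 + 1) i.2.2.2 * v.1 ^ i.1 * v.2.1 ^ i.2.1
        * (((i.2.2.1 : ℝ) + 1) * v.2.2.1 ^ i.2.2.1) * v.2.2.2 ^ i.2.2.2
      = ∑' i : ℕ × ℕ × ℕ × ℕ,
      u0 i.1 i.2.1 i.2.2.1 i.2.2.2 * v.1 ^ i.1 * v.2.1 ^ i.2.1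
        * ((i.2.2.1 : ℝ) * v.2.2.1 ^ (i.2.2.1 - 1)) * v.2.2.2 ^ i.2.2.2 := by
    have := hg3.tsum_eq (f := fun i : ℕ × ℕ × ℕ × ℕ =>
      u0 i.1 i.2.1 i.2.2.1 i.2.2.2 * v.1 ^ i.1 * v.2.1 ^ i.2.1
        * ((i.2.2.1 : ℝ) * v.2.2.1 ^ (i.2.2.1 - 1)) * v.2.2.2 ^ i.2.2.2) ?_
    · rw [← this]
      refine tsum_congr fun i => ?_
      obtain ⟨ω, p, q, r⟩ := i
      push_cast
      simp [Nat.add_sub_cancel]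
    · rintro ⟨ω, p, q, r⟩ hi
      rcases Nat.eq_zero_or_pos q with h0 | hp
      · exfalso; apply hi; subst h0; simp
      · exact ⟨(ω, p, q - 1, r), by show (ω, p, q - 1 + 1, r) = (ω, p, q, r); simp only [Prod.ext_iff, and_true, true_and, eq_self_iff_true]; omega⟩
  have hre2 : ∑' i : ℕ × ℕ × ℕ × ℕ,
      u2 i.1 i.2.1 i.2.2.1 (i.2.2.2 + 1) * v.1 ^ i.1 * v.2.1 ^ i.2.1
        * v.2.2.1 ^ i.2.2.1 * (((i.2.2.2 : ℝ) + 1) * v.2.2.2 ^ i.2.2.2)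
      = ∑' i : ℕ × ℕ × ℕ × ℕ,
      u2 i.1 i.2.1 i.2.2.1 i.2.2.2 * v.1 ^ i.1 * v.2.1 ^ i.2.1
        * v.2.2.1 ^ i.2.2.1 * ((i.2.2.2 : ℝ) * v.2.2.2 ^ (i.2.2.2 - 1)) := by
    have := hg4.tsum_eq (f := fun i : ℕ × ℕ × ℕ × ℕ =>
      u2 i.1 i.2.1 i.2.2.1 i.2.2.2 * v.1 ^ i.1 * v.2.1 ^ i.2.1
        * v.2.2.1 ^ i.2.2.1 * ((i.2.2.2 : ℝ) * v.2.2.2 ^ (i.2.2.2 - 1))) ?_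
    · rw [← this]
      refine tsum_congr fun i => ?_
      obtain ⟨ω, p, q, r⟩ := i
      push_cast
      simp [Nat.add_sub_cancel]
    · rintro ⟨ω, p, q, r⟩ hi
      rcases Nat.eq_zero_or_pos r with h0 | hp
      · exfalso; apply hi; subst h0; simp
      · exact ⟨(ω, p, q, r - 1), by show (ω, p, q, r - 1 + 1) = (ω, p, q, r); simp only [Prod.ext_iff, and_true, true_and, eq_self_iff_true]; omega⟩
  rw [← hre1, ← hre0, ← hre2]
  have hA' : Summable (fun i : ℕ × ℕ × ℕ × ℕ =>
      u1 i.1 (i.2.1 + 1) i.2.2.1 i.2.2.2 * v.1 ^ i.1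
        * (((i.2.1 : ℝ) + 1) * v.2.1 ^ i.2.1) * v.2.2.1 ^ i.2.2.1 * v.2.2.2 ^ i.2.2.2) := by
    have h := hA.comp_injective hg2
    refine h.congr fun i => ?_
    obtain ⟨ω, p, q, r⟩ := i
    simp only [Function.comp_apply]
    push_cast
    simp [Nat.add_sub_cancel]
  have hB' : Summable (fun i : ℕ × ℕ × ℕ × ℕ =>
      u0 i.1 i.2.1 (i.2.2.1 + 1) i.2.2.2 * v.1 ^ i.1 * v.2.1 ^ i.2.1
        * (((i.2.2.1 : ℝ) + 1) * v.2.2.1 ^ i.2.2.1) * v.2.2.2 ^ i.2.2.2) := by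
    have h := hB.comp_injective hg3
    refine h.congr fun i => ?_
    obtain ⟨ω, p, q, r⟩ := i
    simp only [Function.comp_apply]
    push_cast
    simp [Nat.add_sub_cancel]
  have hC' : Summable (fun i : ℕ × ℕ × ℕ × ℕ =>
      u2 i.1 i.2.1 i.2.2.1 (i.2.2.2 + 1) * v.1 ^ i.1 * v.2.1 ^ i.2.1
        * v.2.2.1 ^ i.2.2.1 * (((i.2.2.2 : ℝ) + 1) * v.2.2.2 ^ i.2.2.2)) := by
    have h := hC.comp_injective hg4
    refine h.congr fun i => ?_
    obtain ⟨ω, p, q, r⟩ := i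
    simp only [Function.comp_apply]
    push_cast
    simp [Nat.add_sub_cancel]
  rw [← Summable.tsum_add hA' hB', ← Summable.tsum_add (hA'.add hB') hC']
  have hz : ∀ i : ℕ × ℕ × ℕ × ℕ,
      (u1 i.1 (i.2.1 + 1) i.2.2.1 i.2.2.2 * v.1 ^ i.1
        * (((i.2.1 : ℝ) + 1) * v.2.1 ^ i.2.1) * v.2.2.1 ^ i.2.2.1 * v.2.2.2 ^ i.2.2.2
      + u0 i.1 i.2.1 (i.2.2.1 + 1) i.2.2.2 * v.1 ^ i.1 * v.2.1 ^ i.2.1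
        * (((i.2.2.1 : ℝ) + 1) * v.2.2.1 ^ i.2.2.1) * v.2.2.2 ^ i.2.2.2)
      + u2 i.1 i.2.1 i.2.2.1 (i.2.2.2 + 1) * v.1 ^ i.1 * v.2.1 ^ i.2.1
        * v.2.2.1 ^ i.2.2.1 * (((i.2.2.2 : ℝ) + 1) * v.2.2.2 ^ i.2.2.2) = 0 := by
    rintro ⟨ω, p, q, r⟩
    simp only
    rw [hrec ω p q r]
    have hq : ((q : ℝ) + 1) ≠ 0 := by positivity
    field_simp
    ring
  exact (tsum_congr hz).trans tsum_zero
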